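/- Let C be a subset of an abelian group G and π : G → H a surjective group homomorphism whose restriction to C is injective. If π(C) is a minimal complement in H, then C is a minimal complement in G. -/

import Mathlib

open Pointwise

/-- If `π : G → H` is a surjective homomorphism injective on `C` and `π(C)` is a minimal
complement in `H`, then `C` is a minimal complement in `G`. -/
theorem minimal_complement_of_quotient {G H : Type*} [AddCommGroup G] [AddCommGroup H]
    (π : G →+ H) (hsurj : Function.Surjective π) (C : Set G) (hinj : Set.InjOn π C)
    (hmin : ∃ W : Set H, W + (π '' C) = Set.univ ∧
      ∀ C' : Set H, C' ⊂ π '' C → W + C' ≠ Set.univ) :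
    ∃ W' : Set G, W' + C = Set.univ ∧ ∀ C' : Set G, C' ⊂ C → W' + C' ≠ Set.univ := by
  obtain ⟨W, hW, hWmin⟩ := hmin
  refine ⟨π ⁻¹' W, ?_, ?_⟩
  · ext g
    simp only [Set.mem_univ, iff_true]
    have hg : π g ∈ W + π '' C := hW ▸ Set.mem_univ _
    rw [Set.mem_add] at hg
    obtain ⟨w, hw, pc, ⟨c, hc, rfl⟩, heq⟩ := hg
    rw [Set.mem_add]
    refine ⟨g - c, ?_, c, hc, by abel⟩
    simp only [Set.mem_preimage, map_sub]
    have : π g - π c = w := by rw [← heq]; abel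
    rwa [this]
  · intro C' hC' hcontra
    refine hWmin (π '' C') ⟨Set.image_mono (f := π) hC'.1, fun hsub => ?_⟩ ?_
    · obtain ⟨c, hcC, hcC'⟩ := Set.exists_of_ssubset hC'
      obtain ⟨c', hc'C', heq⟩ := hsub ⟨c, hcC, rfl⟩
      exact hcC' (hinj (hC'.1 hc'C') hcC heq ▸ hc'C')
    · ext h
      simp only [Set.mem_univ, iff_true]
      obtain ⟨g, rfl⟩ := hsurj h
      have hg : g ∈ π ⁻¹' W + C' := hcontra ▸ Set.mem_univ _
      rw [Set.mem_add] at hg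
      obtain ⟨w, hw, c, hc, rfl⟩ := hg
      exact Set.mem_add.mpr ⟨π w, hw, π c, ⟨c, hc, rfl⟩, (map_add π w c).symm⟩
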